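/- Let n ≥ 2, let D = {(X_1,Y_1),…,(X_n,Y_n)} be a dataset of pairs of reals with all X_i distinct and all Y_i distinct, and let D' = D ∪ {(X_{n+1},Y_{n+1})} be a neighboring dataset obtained by adding one point (so that D' also has all first coordinates distinct and all second coordinates distinct). Then |τ̂(D) − τ̂(D')| ≤ 3/2. -/

import Mathlib

/-- The number of discordant pairs of a dataset `{(X i, Y i)}`: pairs of indices `i < i'`
with `(X i - X i') * (Y i - Y i') < 0`. -/
noncomputable def discord {m : ℕ} (X Y : Fin m → ℝ) : ℕ :=
  (Finset.univ.filter (fun p : Fin m × Fin m =>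
    p.1 < p.2 ∧ (X p.1 - X p.2) * (Y p.1 - Y p.2) < 0)).card

/-- The empirical Kendall rank correlation `τ̂ = m/2 - 2 d / (m - 1)`. -/
noncomputable def tauHat {m : ℕ} (X Y : Fin m → ℝ) : ℝ :=
  (m : ℝ) / 2 - 2 * (discord X Y : ℝ) / ((m : ℝ) - 1)

open Finset

lemma two_mul_discord_le {m : ℕ} (X Y : Fin m → ℝ) :
    2 * discord X Y ≤ m * (m - 1) := by
  classical
  set T : Finset (Fin m × Fin m) := univ.filter (fun p => p.1 < p.2) with hT
  have hd : discord X Y ≤ T.card := by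
    apply card_le_card
    intro p hp
    simp only [hT, mem_filter, mem_univ, true_and] at hp ⊢
    exact hp.1
  have hdisj : Disjoint T (T.image Prod.swap) := by
    rw [disjoint_left]
    rintro p hp hp'
    simp only [hT, mem_filter, mem_image, mem_univ, true_and] at hp hp'
    obtain ⟨q, hq, hqp⟩ := hp'
    subst hqp
    exact absurd hp (lt_asymm hq)
  have hunion : T ∪ T.image Prod.swap = (univ : Finset (Fin m)).offDiag := by
    ext p
    simp only [mem_union, mem_image, mem_offDiag, mem_univ, true_and, hT, mem_filter]
    constructor
    · rintro (h | ⟨q, hq, rfl⟩)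
      · exact ne_of_lt h
      · exact (ne_of_lt hq).symm
    · intro h
      rcases lt_or_gt_of_ne h with h | h
      · exact Or.inl h
      · exact Or.inr ⟨p.swap, h, Prod.swap_swap p⟩
  have hcard : T.card + T.card = m * m - m := by
    have := congrArg Finset.card hunion
    rw [card_union_of_disjoint hdisj, card_image_of_injective _ Prod.swap_injective,
      Finset.offDiag_card, card_univ, Fintype.card_fin] at this
    exact this
  have h2 : 2 * T.card = m * (m - 1) := by
    rw [two_mul, hcard]
    cases m with
    | zero => rfl
    | succ k => rw [Nat.succ_sub_one, Nat.mul_succ, Nat.add_sub_cancel]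
  omega

lemma discord_mono (n : ℕ) (X Y : Fin (n + 1) → ℝ) :
    discord (fun i : Fin n => X i.castSucc) (fun i : Fin n => Y i.castSucc) ≤ discord X Y := by
  classical
  unfold discord
  apply Finset.card_le_card_of_injOn (fun p => (p.1.castSucc, p.2.castSucc))
  · intro p hp
    simp only [Finset.mem_coe, mem_filter, mem_univ, true_and] at hp ⊢
    exact ⟨Fin.castSucc_lt_castSucc_iff.2 hp.1, hp.2⟩
  · intro p _ q _ h
    simp only [Prod.mk.injEq, Fin.castSucc_inj] at h
    exact Prod.ext h.1 h.2

lemma discord_add_le (n : ℕ) (X Y : Fin (n + 1) → ℝ) :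
    discord X Y ≤ discord (fun i : Fin n => X i.castSucc) (fun i : Fin n => Y i.castSucc) + n := by
  classical
  set S : Finset (Fin n × Fin n) := univ.filter (fun p =>
    p.1 < p.2 ∧ (X p.1.castSucc - X p.2.castSucc) * (Y p.1.castSucc - Y p.2.castSucc) < 0) with hS
  set S' : Finset (Fin (n+1) × Fin (n+1)) := univ.filter (fun p =>
    p.1 < p.2 ∧ (X p.1 - X p.2) * (Y p.1 - Y p.2) < 0) with hS'
  have hsplit : (S'.filter (fun p => p.2 = Fin.last n)).card
      + (S'.filter (fun p => ¬ p.2 = Fin.last n)).card = S'.card :=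
    card_filter_add_card_filter_not _
  have hA : (S'.filter (fun p => p.2 = Fin.last n)).card ≤ n := by
    have h1 : (S'.filter (fun p => p.2 = Fin.last n)).card
        ≤ ((univ : Finset (Fin (n+1))).erase (Fin.last n)).card := by
      apply Finset.card_le_card_of_injOn (fun p => p.1)
      · intro p hp
        simp only [Finset.mem_coe, hS', mem_filter, mem_univ, true_and] at hp ⊢
        rcases hp with ⟨⟨h1, _⟩, h2⟩
        exact mem_erase.2 ⟨ne_of_lt (h2 ▸ h1), mem_univ _⟩
      · intro p hp q hq h
        simp only [Finset.mem_coe, hS', mem_filter] at hp hq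
        exact Prod.ext h (hp.2.trans hq.2.symm)
    rwa [card_erase_of_mem (mem_univ _), card_univ, Fintype.card_fin,
      Nat.add_sub_cancel] at h1
  have hB : S'.filter (fun p => ¬ p.2 = Fin.last n)
      ⊆ S.image (fun p => (p.1.castSucc, p.2.castSucc)) := by
    intro p hp
    simp only [hS', mem_filter, mem_univ, true_and] at hp
    obtain ⟨⟨hlt, hcond⟩, hne⟩ := hp
    obtain ⟨j, hj⟩ := Fin.eq_castSucc_of_ne_last hne
    have hne1 : p.1 ≠ Fin.last n := by
      intro h
      rw [h, ← hj] at hlt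
      exact absurd (Fin.castSucc_lt_last j) (lt_asymm hlt)
    obtain ⟨i, hi⟩ := Fin.eq_castSucc_of_ne_last hne1
    refine mem_image.2 ⟨(i, j), ?_, by simp [hi, hj]⟩
    simp only [hS, mem_filter, mem_univ, true_and]
    refine ⟨?_, by rw [hi, hj]; exact hcond⟩
    rw [← Fin.castSucc_lt_castSucc_iff, hi, hj]
    exact hlt
  have hBcard : (S'.filter (fun p => ¬ p.2 = Fin.last n)).card ≤ S.card :=
    (card_le_card hB).trans card_image_le
  calc discord X Y = S'.card := rfl
    _ = _ + _ := hsplit.symm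
    _ ≤ n + S.card := Nat.add_le_add hA hBcard
    _ = S.card + n := Nat.add_comm _ _

/-- Adding one data point to a tie-free dataset of at least two points changes the
empirical Kendall rank correlation by at most `3/2`. -/
theorem kendall_add_one_sensitivity (n : ℕ) (hn : 2 ≤ n)
    (X Y : Fin (n + 1) → ℝ) (hX : Function.Injective X) (hY : Function.Injective Y) :
    |tauHat (fun i : Fin n => X i.castSucc) (fun i : Fin n => Y i.castSucc) - tauHat X Y|
      ≤ 3 / 2 := by
  have h1 := discord_mono n X Y
  have h2 := discord_add_le n X Y
  have h3 := two_mul_discord_le (fun i : Fin n => X i.castSucc) (fun i : Fin n => Y i.castSucc)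
  have hN : (2:ℝ) ≤ (n:ℝ) := by exact_mod_cast hn
  have hn0 : (0:ℝ) < (n:ℝ) := by linarith
  have hn1 : (0:ℝ) < (n:ℝ) - 1 := by linarith
  unfold tauHat
  push_cast
  have e1 : (n:ℝ) + 1 - 1 = (n:ℝ) := by ring
  rw [e1]
  set a : ℝ := (discord (fun i : Fin n => X i.castSucc) (fun i : Fin n => Y i.castSucc) : ℝ)
    with ha
  set b : ℝ := (discord X Y : ℝ) with hb
  have hab : a ≤ b := by rw [ha, hb]; exact_mod_cast h1
  have hba : b ≤ a + n := by rw [ha, hb]; exact_mod_cast h2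
  have h2a : 2 * a ≤ (n:ℝ) * ((n:ℝ) - 1) := by
    have h4 : ((2 * discord (fun i : Fin n => X i.castSucc)
        (fun i : Fin n => Y i.castSucc) : ℕ) : ℝ) ≤ ((n * (n-1) : ℕ) : ℝ) := by
      exact_mod_cast h3
    push_cast [Nat.cast_sub (by omega : 1 ≤ n)] at h4
    rw [ha]; linarith
  have ha0 : (0:ℝ) ≤ a := by rw [ha]; positivity
  have hu : (2*a/((n:ℝ)-1)) * ((n:ℝ)-1) = 2*a := div_mul_cancel₀ _ hn1.ne'
  have hv : (2*b/(n:ℝ)) * (n:ℝ) = 2*b := div_mul_cancel₀ _ hn0.ne'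
  have hu0 : 0 ≤ 2*a/((n:ℝ)-1) := by positivity
  have key1 : 2*b/(n:ℝ) ≤ 2*a/((n:ℝ)-1) + 2 := by
    rw [div_le_iff₀ hn0]
    have h5 : 2*a ≤ (2*a/((n:ℝ)-1)) * (n:ℝ) := by
      calc 2*a = (2*a/((n:ℝ)-1)) * ((n:ℝ)-1) := hu.symm
        _ ≤ (2*a/((n:ℝ)-1)) * (n:ℝ) := by nlinarith
    nlinarith
  have key2 : 2*a/((n:ℝ)-1) ≤ 2*b/(n:ℝ) + 1 := by
    have s1 : 2*a/(n:ℝ) ≤ 2*b/(n:ℝ) := by gcongr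
    have s2 : 2*a/((n:ℝ)-1) ≤ 2*a/(n:ℝ) + 1 := by
      rw [div_le_iff₀ hn1]
      have h7 : (2*a/(n:ℝ)) * (n:ℝ) = 2*a := div_mul_cancel₀ _ hn0.ne'
      have h8 : 2*a/(n:ℝ) ≤ (n:ℝ)-1 := by rw [div_le_iff₀ hn0]; nlinarith
      nlinarith
    linarith
  rw [abs_le]
  constructor <;> linarith [key1, key2]
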